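/- Let Ω ⊂ ℝ² be a bounded domain with |Ω| < ∞, let q₀ > 2, and let v : Ω → ℝ be measurable. Suppose there exist constants C₁ > 0 and R₀ > 0 such that for every R ∈ (0, R₀] and every y ∈ Ω, ‖v‖_{L^{q₀}(Ω \ closure(B_R(y)))} ≤ C₁ R^{−1+2/q₀}. Also suppose v is supported so that the set {|v| > t} ∩ closure(B_{1/t}(y)) has measure at most C₂ t⁻² for t > R₀⁻¹ (e.g. trivially since |B_{1/t}(y)| = π t⁻²). Then the weak-L² quasinorm sup_{t>0} t |{x ∈ Ω : |v(x)| > t}|^{1/2} is bounded by a constant depending only on C₁, R₀, |Ω|, q₀. -/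

import Mathlib

open MeasureTheory Metric Set

/-- weak-L² bound from annular `L^{q₀}` decay: if
`‖v‖_{L^{q₀}(Ω \ closure B_R(y))} ≤ C₁ R^{−1+2/q₀}` for all `R ∈ (0,R₀]` and the
superlevel sets inside `closure B_{1/t}(y)` have measure `≤ C₂ t⁻²` for `t > R₀⁻¹`,
then `sup_{t>0} t |{|v|>t}|^{1/2} ≤ C(C₁, C₂, R₀, |Ω|, q₀)`. -/
theorem stmt_5 (q₀ C₁ C₂ R₀ a : ℝ) (hq₀ : 2 < q₀) (hC₁ : 0 ≤ C₁) (hC₂ : 0 ≤ C₂)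
    (hR₀ : 0 < R₀) (ha : 0 ≤ a) :
    ∃ C : ℝ, 0 < C ∧
      ∀ (Ω : Set (EuclideanSpace ℝ (Fin 2))) (v : EuclideanSpace ℝ (Fin 2) → ℝ)
        (y : EuclideanSpace ℝ (Fin 2)),
        MeasurableSet Ω → Measurable v → volume Ω = ENNReal.ofReal a → y ∈ Ω →
        (∀ R : ℝ, 0 < R → R ≤ R₀ →
          eLpNorm v (ENNReal.ofReal q₀) (volume.restrict (Ω \ closure (ball y R))) ≤
            ENNReal.ofReal (C₁ * R ^ (-1 + 2 / q₀))) →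
        (∀ t : ℝ, R₀⁻¹ < t →
          volume ({x ∈ Ω | t < |v x|} ∩ closure (ball y (1 / t))) ≤
            ENNReal.ofReal (C₂ * (t ^ 2)⁻¹)) →
        ∀ t : ℝ, 0 < t →
          t * Real.sqrt ((volume {x ∈ Ω | t < |v x|}).toReal) ≤ C := by
  have hq₀0 : (0:ℝ) < q₀ := by linarith
  refine ⟨R₀⁻¹ * Real.sqrt a + Real.sqrt (C₂ + C₁ ^ q₀) + 1, by positivity, ?_⟩
  intro Ω v y hΩ hv hvol hy hLp hsup t ht
  set S := {x ∈ Ω | t < |v x|} with hSdef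
  have hSΩ : S ⊆ Ω := fun x hx => hx.1
  have hfin : volume S ≤ ENNReal.ofReal a := hvol ▸ measure_mono hSΩ
  have hnonneg1 : 0 ≤ Real.sqrt (C₂ + C₁ ^ q₀) := Real.sqrt_nonneg _
  have hnonneg2 : 0 ≤ R₀⁻¹ * Real.sqrt a := by positivity
  by_cases hcase : t ≤ R₀⁻¹
  · have h1 : (volume S).toReal ≤ a := by
      have := ENNReal.toReal_mono (by simp) hfin
      simpa [ENNReal.toReal_ofReal ha] using this
    have h2 : t * Real.sqrt ((volume S).toReal) ≤ R₀⁻¹ * Real.sqrt a := by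
      have := Real.sqrt_le_sqrt h1
      have h3 : 0 ≤ Real.sqrt ((volume S).toReal) := Real.sqrt_nonneg _
      nlinarith
    linarith
  · push_neg at hcase
    set R := t⁻¹ with hRdef
    have hRpos : 0 < R := by positivity
    have hRle : R ≤ R₀ := by
      rw [hRdef]
      rw [inv_le_comm₀ ht hR₀]  -- maybe wrong name
      exact le_of_lt hcase
    -- Chebyshev bound on the outer part
    have hq₀ne : (ENNReal.ofReal q₀) ≠ 0 := by
      simp [ENNReal.ofReal_eq_zero]; linarith
    have hq₀top : (ENNReal.ofReal q₀) ≠ ⊤ := ENNReal.ofReal_ne_top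
    have htoReal : (ENNReal.ofReal q₀).toReal = q₀ := ENNReal.toReal_ofReal hq₀0.le
    have cheb := mul_meas_ge_le_pow_eLpNorm' (volume.restrict (Ω \ closure (ball y R)))
      hq₀ne hq₀top hv.aestronglyMeasurable (ENNReal.ofReal t)
    rw [htoReal] at cheb
    have hLpR := hLp R hRpos hRle
    have hLpRpow : eLpNorm v (ENNReal.ofReal q₀) (volume.restrict (Ω \ closure (ball y R))) ^ q₀
        ≤ ENNReal.ofReal ((C₁ * R ^ (-1 + 2 / q₀)) ^ q₀) := by
      rw [← ENNReal.ofReal_rpow_of_nonneg (by positivity) hq₀0.le]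
      exact ENNReal.rpow_le_rpow hLpR hq₀0.le
    -- volume of outer part
    have hCmble : MeasurableSet (Ω \ closure (ball y R)) :=
      hΩ.diff isClosed_closure.measurableSet
    have houter : volume (S \ closure (ball y R)) ≤
        (volume.restrict (Ω \ closure (ball y R))) {x | ENNReal.ofReal t ≤ (‖v x‖₊ : ENNReal)} := by
      rw [Measure.restrict_apply' hCmble]
      apply measure_mono
      intro x hx
      refine ⟨?_, hx.1.1, hx.2⟩
      have : t ≤ |v x| := le_of_lt hx.1.2
      simp only [Set.mem_setOf_eq]
      rw [← ENNReal.ofReal_le_ofReal_iff (abs_nonneg _)] at this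
      simpa [← ofReal_norm, Real.norm_eq_abs] using this
    have key : ENNReal.ofReal t ^ q₀ * volume (S \ closure (ball y R)) ≤
        ENNReal.ofReal ((C₁ * R ^ (-1 + 2 / q₀)) ^ q₀) :=
      le_trans (mul_le_mul_right houter _) (le_trans cheb hLpRpow)
    -- convert to measure bound
    have htq : (ENNReal.ofReal t) ^ q₀ = ENNReal.ofReal (t ^ q₀) :=
      ENNReal.ofReal_rpow_of_nonneg ht.le hq₀0.le
    have harith : (C₁ * R ^ (-1 + 2 / q₀)) ^ q₀ = C₁ ^ q₀ * t ^ (q₀ - 2) := by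
      rw [Real.mul_rpow hC₁ (by positivity), hRdef, ← Real.rpow_neg_one t,
        ← Real.rpow_mul ht.le, ← Real.rpow_mul ht.le]
      congr 1
      field_simp
      ring
    have houter2 : volume (S \ closure (ball y R)) ≤ ENNReal.ofReal (C₁ ^ q₀ * (t ^ 2)⁻¹) := by
      rw [htq, harith] at key
      by_contra hcon
      push_neg at hcon
      have h5 : ENNReal.ofReal (t ^ q₀) * ENNReal.ofReal (C₁ ^ q₀ * (t ^ 2)⁻¹) <
          ENNReal.ofReal (t ^ q₀) * volume (S \ closure (ball y R)) := by
        apply ENNReal.mul_lt_mul_right ?_ ?_ hcon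
        · simp [ENNReal.ofReal_eq_zero]; positivity
        · exact ENNReal.ofReal_ne_top
      rw [← ENNReal.ofReal_mul (by positivity)] at h5
      have h6 : t ^ q₀ * (C₁ ^ q₀ * (t ^ 2)⁻¹) = C₁ ^ q₀ * t ^ (q₀ - 2) := by
        rw [Real.rpow_sub ht, show (2:ℝ) = ((2:ℕ):ℝ) by norm_num, Real.rpow_natCast]
        field_simp
      rw [h6] at h5
      exact absurd key (not_le.mpr h5)
    -- inner part
    have hinner := hsup t hcase
    have hsplit : volume S ≤ ENNReal.ofReal ((C₂ + C₁ ^ q₀) * (t ^ 2)⁻¹) := by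
      have : S ⊆ (S ∩ closure (ball y (1 / t))) ∪ (S \ closure (ball y R)) := by
        intro x hx
        by_cases hxc : x ∈ closure (ball y R)
        · left; exact ⟨hx, by rwa [one_div]⟩
        · right; exact ⟨hx, hxc⟩
      calc volume S ≤ volume (S ∩ closure (ball y (1 / t))) + volume (S \ closure (ball y R)) :=
            le_trans (measure_mono this) (measure_union_le _ _)
        _ ≤ ENNReal.ofReal (C₂ * (t ^ 2)⁻¹) + ENNReal.ofReal (C₁ ^ q₀ * (t ^ 2)⁻¹) :=
            add_le_add hinner houter2
        _ = ENNReal.ofReal ((C₂ + C₁ ^ q₀) * (t ^ 2)⁻¹) := by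
            rw [← ENNReal.ofReal_add (by positivity) (by positivity)]; ring_nf
    have hm : (volume S).toReal ≤ (C₂ + C₁ ^ q₀) * (t ^ 2)⁻¹ := by
      have := ENNReal.toReal_mono ENNReal.ofReal_ne_top hsplit
      simpa [ENNReal.toReal_ofReal (by positivity : (0:ℝ) ≤ (C₂ + C₁ ^ q₀) * (t ^ 2)⁻¹)] using this
    have h2 : t * Real.sqrt ((volume S).toReal) ≤ Real.sqrt (C₂ + C₁ ^ q₀) := by
      have h3 := Real.sqrt_le_sqrt hm
      rw [Real.sqrt_mul (by positivity), Real.sqrt_inv, Real.sqrt_sq ht.le] at h3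
      calc t * Real.sqrt ((volume S).toReal) ≤ t * (Real.sqrt (C₂ + C₁ ^ q₀) * t⁻¹) := by
            apply mul_le_mul_of_nonneg_left h3 ht.le
        _ = Real.sqrt (C₂ + C₁ ^ q₀) := by field_simp
    linarith
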